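/- For a > 0, σ > 0, b ≥ h > 0 with b/(b+h) ≥ 1/2, set β* = (b/(b+h))^{1/N}. The function Z(β, q) = ((b+h)/2)·[Nμ - q + 2β^N(q - Nμ) + 2Nβ^N σ·sqrt((1-β)/β)] + ((b-h)/2)(Nμ - q) has a saddle point at β = β* and q* = Nμ + σ·((2β* - 1)/(2·sqrt((1-β*)β*)) - (N-1)·sqrt((1-β*)/β*)), with saddle value Z(β*, q*) = bσN·sqrt((1-β*)/β*). -/

import Mathlib

open Real

/-- Worst-case expected inventory cost as a function of the adversary's
probability `β` and the firm's inventory level `q`. -/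
noncomputable def invCost (N : ℕ) (μ σ b h : ℝ) (β q : ℝ) : ℝ :=
  ((b + h) / 2) *
      (N * μ - q + 2 * β ^ N * (q - N * μ)
        + 2 * N * β ^ N * σ * Real.sqrt ((1 - β) / β))
    + ((b - h) / 2) * (N * μ - q)

private lemma bern_aux (n : ℕ) (x y : ℝ) (hx : 0 ≤ x) (hy : 0 ≤ y) :
    (n : ℝ) * y ^ n * (x - y) ≤ y * (x ^ n - y ^ n) := by
  induction n with
  | zero => simp
  | succ n ih =>
    have h1 : x * ((n : ℝ) * y ^ n * (x - y)) ≤ x * (y * (x ^ n - y ^ n)) :=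
      mul_le_mul_of_nonneg_left ih hx
    have h2 : 0 ≤ (n : ℝ) * y ^ n * (x - y) ^ 2 := by positivity
    rw [pow_succ x, pow_succ y]
    push_cast
    nlinarith [h1, h2]

private lemma core_ineq (n : ℕ) (u v : ℝ) :
    (1 - (2 * (n : ℝ) - 1) * v ^ 2 + 2 * (n : ℝ) * u * v) * (1 + v ^ 2) ^ n
      ≤ (1 + v ^ 2) * (1 + u ^ 2) ^ n := by
  have hx : (0:ℝ) ≤ 1 + u ^ 2 := by positivity
  have hy : (0:ℝ) ≤ 1 + v ^ 2 := by positivity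
  have h1 : (1 - (2 * (n : ℝ) - 1) * v ^ 2 + 2 * (n : ℝ) * u * v)
      ≤ (1 + v ^ 2) + (n : ℝ) * ((1 + u ^ 2) - (1 + v ^ 2)) := by
    nlinarith [mul_nonneg (Nat.cast_nonneg (α := ℝ) n) (sq_nonneg (u - v))]
  have h2 : (1 - (2 * (n : ℝ) - 1) * v ^ 2 + 2 * (n : ℝ) * u * v) * (1 + v ^ 2) ^ n
      ≤ ((1 + v ^ 2) + (n : ℝ) * ((1 + u ^ 2) - (1 + v ^ 2))) * (1 + v ^ 2) ^ n :=
    mul_le_mul_of_nonneg_right h1 (by positivity)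
  have h3 : ((1 + v ^ 2) + (n : ℝ) * ((1 + u ^ 2) - (1 + v ^ 2))) * (1 + v ^ 2) ^ n
      ≤ (1 + v ^ 2) * (1 + u ^ 2) ^ n := by
    nlinarith [bern_aux n (1 + u ^ 2) (1 + v ^ 2) hx hy]
  exact h2.trans h3

/-- Inventory risk-pooling: with `β* = (b/(b+h))^{1/N}` and the stated `q*`,
the pair `(β*, q*)` is a saddle point of the zero-sum game, with value
`bσN·√((1-β*)/β*)`. -/
theorem inventory_saddle_point (N : ℕ) (hN : 1 ≤ N) (μ σ b h : ℝ)
    (hσ : 0 < σ) (hh : 0 < h) (hbh : h ≤ b)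
    (hhalf : (1 : ℝ) / 2 ≤ b / (b + h)) :
    let βstar : ℝ := (b / (b + h)) ^ ((1 : ℝ) / N)
    let qstar : ℝ := N * μ + σ *
      ((2 * βstar - 1) / (2 * Real.sqrt ((1 - βstar) * βstar))
        - (N - 1 : ℝ) * Real.sqrt ((1 - βstar) / βstar))
    invCost N μ σ b h βstar qstar = b * σ * N * Real.sqrt ((1 - βstar) / βstar)
      ∧ (∀ β : ℝ, 0 < β → β < 1 → invCost N μ σ b h β qstar
            ≤ invCost N μ σ b h βstar qstar)
      ∧ (∀ q : ℝ, invCost N μ σ b h βstar qstar ≤ invCost N μ σ b h βstar q) := by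
  intro βstar qstar
  have hb : 0 < b := lt_of_lt_of_le hh hbh
  have hbh0 : 0 < b + h := by linarith
  have hr0 : 0 < b / (b + h) := div_pos hb hbh0
  have hr1 : b / (b + h) < 1 := (div_lt_one hbh0).mpr (by linarith)
  have hβ0 : 0 < βstar := Real.rpow_pos_of_pos hr0 _
  have hβ1 : βstar < 1 := by
    have : (0:ℝ) < 1 / N := by
      have : (0:ℝ) < (N:ℝ) := by exact_mod_cast Nat.pos_of_ne_zero (by omega)
      positivity
    exact Real.rpow_lt_one hr0.le hr1 this
  have hβN : βstar ^ N = b / (b + h) := by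
    have : βstar = (b / (b + h)) ^ (((N:ℕ):ℝ)⁻¹) := by
      simp [βstar, one_div]
    rw [this]
    exact Real.rpow_inv_natCast_pow hr0.le (by omega)
  have hbN : (b + h) * βstar ^ N = b := by
    rw [hβN]; field_simp
  -- value of the cost at β = βstar is independent of q
  have valAt : ∀ q : ℝ, invCost N μ σ b h βstar q
      = b * σ * N * Real.sqrt ((1 - βstar) / βstar) := by
    intro q
    unfold invCost
    linear_combination (q - N * μ + N * σ * Real.sqrt ((1 - βstar) / βstar)) * hbN
  refine ⟨valAt qstar, ?_, ?_⟩
  · -- maximality in β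
    intro β hβp hβq
    rw [valAt qstar]
    set v : ℝ := Real.sqrt ((1 - βstar) / βstar) with hvdef
    have hv0 : 0 < v := Real.sqrt_pos.mpr (div_pos (by linarith) hβ0)
    have hv2 : v ^ 2 = (1 - βstar) / βstar :=
      Real.sq_sqrt (div_nonneg (by linarith) hβ0.le)
    have hβv : βstar * (1 + v ^ 2) = 1 := by
      rw [hv2]; field_simp; ring
    have hsv : Real.sqrt ((1 - βstar) * βstar) = βstar * v := by
      have h1 : (1 - βstar) * βstar = ((1 - βstar) / βstar) * βstar ^ 2 := by
        field_simp
      rw [h1, Real.sqrt_mul (div_nonneg (by linarith) hβ0.le),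
        Real.sqrt_sq hβ0.le, ← hvdef]
      ring
    have hq2 : qstar = N * μ + σ *
        ((2 * βstar - 1) / (2 * (βstar * v)) - (N - 1 : ℝ) * v) := by
      show (N * μ + σ *
        ((2 * βstar - 1) / (2 * Real.sqrt ((1 - βstar) * βstar))
          - (N - 1 : ℝ) * Real.sqrt ((1 - βstar) / βstar)) : ℝ) = _
      rw [hsv]
    have hΔv : 2 * v * (qstar - N * μ) = σ * (1 - (2 * (N:ℝ) - 1) * v ^ 2) := by
      rw [hq2]
      have hβne : βstar ≠ 0 := ne_of_gt hβ0
      have hvne : v ≠ 0 := ne_of_gt hv0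
      field_simp
      linear_combination σ * hβv
    clear_value βstar qstar
    set u : ℝ := Real.sqrt ((1 - β) / β) with hudef
    have hu2 : u ^ 2 = (1 - β) / β :=
      Real.sq_sqrt (div_nonneg (by linarith) hβp.le)
    have hβu : β * (1 + u ^ 2) = 1 := by
      rw [hu2]; field_simp; ring
    have hβK : β ^ N * (1 + u ^ 2) ^ N = 1 := by
      rw [← mul_pow, hβu, one_pow]
    have hβL : βstar ^ N * (1 + v ^ 2) ^ N = 1 := by
      rw [← mul_pow, hβv, one_pow]
    have hbL : b * (1 + v ^ 2) ^ N = b + h := by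
      rw [hβN] at hβL
      field_simp at hβL
      linarith
    set K : ℝ := (1 + u ^ 2) ^ N with hKdef
    set L : ℝ := (1 + v ^ 2) ^ N with hLdef
    have hK : 0 < K := by positivity
    have hL : 0 < L := by positivity
    have Hcore : (1 - (2 * (N:ℝ) - 1) * v ^ 2 + 2 * (N:ℝ) * u * v) * L
        ≤ (1 + v ^ 2) * K := core_ineq N u v
    have key : 2 * v * K * L * (b * σ * N * v - invCost N μ σ b h β qstar)
        = σ * (b + h) * ((1 + v ^ 2) * K
            - (1 - (2 * (N:ℝ) - 1) * v ^ 2 + 2 * (N:ℝ) * u * v) * L) := by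
      unfold invCost
      rw [← hudef]
      linear_combination ((b + h) * (K - L)) * hΔv
        + (2 * v * K * σ * N * v + 2 * v * K * (qstar - N * μ)) * hbL
        + (-(2 * v * L * (b + h) * ((qstar - N * μ) + N * σ * u))) * hβK
    have hpos : 0 < 2 * v * K * L := by positivity
    have h1 : 0 ≤ 2 * v * K * L * (b * σ * N * v - invCost N μ σ b h β qstar) := by
      rw [key]
      have := sub_nonneg.mpr Hcore
      positivity
    have h2 := (mul_nonneg_iff_of_pos_left hpos).mp h1
    linarith
  · intro q
    rw [valAt qstar, valAt q]
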